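/- Let k be a positive integer, n = 2ᵏ, and let W be an m×n real matrix with WᵀW = a·I + b·(J − I) for real constants a, b satisfying a − b > 0 and a + (n−1)b > 0 (J is the all-ones matrix). Then there exists an invertible n×n real matrix A all of whose columns have the same Euclidean norm such that ‖A‖₂² · trace(WᵀW (AᵀA)⁻¹) = (1/n)·(√(a+(n−1)b) + (n−1)·√(a−b))²; that is, the strategy A attains the singular value bound SVDB(W) for the variable agnostic workload W. -/

import Mathlib

open Matrix BigOperators

/-- The maximum Euclidean (L2) column norm of a matrix (its L2 sensitivity). -/
noncomputable def l2Sens {n : ℕ} (A : Matrix (Fin n) (Fin n) ℝ) : ℝ :=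
  ⨆ j, Real.sqrt (∑ i, (A i j) ^ 2)

private noncomputable def Jm (N : ℕ) : Matrix (Fin N) (Fin N) ℝ := Matrix.of fun _ _ => 1

private lemma Jm_mul_Jm (N : ℕ) : Jm N * Jm N = (N : ℝ) • Jm N := by
  ext i j
  simp [Jm, Matrix.mul_apply]

private lemma shape_mul (N : ℕ) (α β γ δ : ℝ) :
    (α • (1 : Matrix (Fin N) (Fin N) ℝ) + β • Jm N) * (γ • 1 + δ • Jm N)
      = (α*γ) • 1 + (α*δ + β*γ + N*β*δ) • Jm N := by
  simp only [add_mul, mul_add, smul_mul_assoc, mul_smul_comm, one_mul, mul_one,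
    Matrix.mul_one, Matrix.one_mul, Jm_mul_Jm, smul_smul]
  module

private lemma shape_transpose (N : ℕ) (α β : ℝ) :
    (α • (1 : Matrix (Fin N) (Fin N) ℝ) + β • Jm N)ᵀ = α • 1 + β • Jm N := by
  rw [Matrix.transpose_add, Matrix.transpose_smul, Matrix.transpose_smul, Matrix.transpose_one]
  rfl

private lemma shape_trace (N : ℕ) (α β : ℝ) :
    Matrix.trace (α • (1 : Matrix (Fin N) (Fin N) ℝ) + β • Jm N) = N * α + N * β := by
  rw [Matrix.trace_add, Matrix.trace_smul, Matrix.trace_smul, Matrix.trace_one]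
  have : Matrix.trace (Jm N) = (N : ℝ) := by
    simp [Matrix.trace, Jm, Matrix.diag]
  rw [this]
  simp [mul_comm]

private lemma shape_colnorm (N : ℕ) (α β : ℝ) (j : Fin N) :
    ∑ i, ((α • (1 : Matrix (Fin N) (Fin N) ℝ) + β • Jm N) i j) ^ 2
      = α^2 + 2*α*β + N*β^2 := by
  have h : ∀ i : Fin N, ((α • (1 : Matrix (Fin N) (Fin N) ℝ) + β • Jm N) i j) ^ 2
      = (if i = j then (α+β)^2 - β^2 else 0) + β^2 := by
    intro i
    by_cases h : i = j <;> simp [h, Jm, Matrix.one_apply] <;> ring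
  rw [Finset.sum_congr rfl fun i _ => h i, Finset.sum_add_distrib, Finset.sum_ite_eq']
  simp
  ring

set_option maxHeartbeats 1000000

/-- **The SVD bound is attained for variable agnostic workloads.**
Let `n = 2ᵏ` and let `W` be an `m×n` workload with `WᵀW = a·I + b·(J−I)`, where
`a − b > 0` and `a + (n−1)b > 0`.  Then there is an invertible column-uniform `n×n`
strategy `A` whose total error `‖A‖₂² · trace(WᵀW (AᵀA)⁻¹)` equals the singular value
bound `(1/n)(√(a+(n−1)b) + (n−1)√(a−b))²`. -/
theorem svdb_attained_variable_agnostic (k : ℕ) (hk : 0 < k) (m : ℕ) (a b : ℝ)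
    (W : Matrix (Fin m) (Fin (2 ^ k)) ℝ)
    (hW : Wᵀ * W =
      a • (1 : Matrix (Fin (2 ^ k)) (Fin (2 ^ k)) ℝ) +
        b • ((Matrix.of fun _ _ => (1 : ℝ)) - 1))
    (hab : 0 < a - b) (hab' : 0 < a + (((2 ^ k : ℕ) : ℝ) - 1) * b) :
    ∃ A : Matrix (Fin (2 ^ k)) (Fin (2 ^ k)) ℝ, IsUnit A.det ∧
      (∀ j₁ j₂ : Fin (2 ^ k),
        Real.sqrt (∑ i, (A i j₁) ^ 2) = Real.sqrt (∑ i, (A i j₂) ^ 2)) ∧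
      (l2Sens A) ^ 2 * Matrix.trace (Wᵀ * W * (Aᵀ * A)⁻¹)
        = (1 / ((2 ^ k : ℕ) : ℝ)) *
            (Real.sqrt (a + (((2 ^ k : ℕ) : ℝ) - 1) * b) +
              (((2 ^ k : ℕ) : ℝ) - 1) * Real.sqrt (a - b)) ^ 2 := by
  have hNpos : 0 < (2 : ℕ) ^ k := pow_pos (by norm_num) k
  haveI : Nonempty (Fin (2 ^ k)) := Fin.pos_iff_nonempty.mp hNpos
  set nR : ℝ := ((2 ^ k : ℕ) : ℝ) with hnR
  have hnpos : (0:ℝ) < nR := by rw [hnR]; exact_mod_cast hNpos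
  have hn1 : (1:ℝ) ≤ nR := by
    rw [hnR]; exact_mod_cast Nat.one_le_iff_ne_zero.mpr hNpos.ne'
  have hnne : nR ≠ 0 := hnpos.ne'
  set l1 : ℝ := a + (nR - 1) * b with hl1def
  set l2 : ℝ := a - b with hl2def
  have hl1 : 0 < l1 := hab'
  have hl2 : 0 < l2 := hab
  set s1 : ℝ := Real.sqrt l1 with hs1def
  set s2 : ℝ := Real.sqrt l2 with hs2def
  have hs1 : 0 < s1 := Real.sqrt_pos.mpr hl1
  have hs2 : 0 < s2 := Real.sqrt_pos.mpr hl2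
  have hs1sq : s1 ^ 2 = l1 := Real.sq_sqrt hl1.le
  have hs2sq : s2 ^ 2 = l2 := Real.sq_sqrt hl2.le
  set t1 : ℝ := Real.sqrt s1 with ht1def
  set t2 : ℝ := Real.sqrt s2 with ht2def
  have ht1 : 0 < t1 := Real.sqrt_pos.mpr hs1
  have ht2 : 0 < t2 := Real.sqrt_pos.mpr hs2
  have ht1sq : t1 ^ 2 = s1 := Real.sq_sqrt hs1.le
  have ht2sq : t2 ^ 2 = s2 := Real.sq_sqrt hs2.le
  set x : ℝ := t2 with hxdef
  set y : ℝ := (t1 - t2) / nR with hydef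
  set c : ℝ := (s1 - s2) / nR with hcdef
  set A : Matrix (Fin (2 ^ k)) (Fin (2 ^ k)) ℝ := x • 1 + y • Jm (2 ^ k) with hAdef
  set B : Matrix (Fin (2 ^ k)) (Fin (2 ^ k)) ℝ
    := (1/s2) • 1 + (-c/(s1*s2)) • Jm (2 ^ k) with hBdef
  have hAt : Aᵀ = A := shape_transpose _ _ _
  -- A * A = s2 • 1 + c • J
  have hxx : x * x = s2 := by rw [hxdef, ← ht2sq]; ring
  have hxy : x * y + y * x + nR * (y * y) = c := by
    have h : x * y + y * x + nR * (y * y) = (t1^2 - t2^2)/nR := by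
      rw [hxdef, hydef]; field_simp; ring
    rw [h, ht1sq, ht2sq, hcdef]
  have hAA : A * A = s2 • 1 + c • Jm (2 ^ k) := by
    rw [hAdef, shape_mul, hxx, ← hnR]
    rw [show x * y + y * x + nR * y * y = c by rw [← hxy]; ring]
  -- right inverse
  have hco1 : s2 * (1/s2) = 1 := by field_simp
  have hco2 : s2 * (-c/(s1*s2)) + c * (1/s2) + nR * c * (-c/(s1*s2)) = 0 := by
    rw [hcdef]
    field_simp
    ring
  have hMB : (s2 • 1 + c • Jm (2 ^ k)) * B = 1 := by
    rw [hBdef, shape_mul, hco1, ← hnR, hco2]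
    simp
  have hAAB : A * (A * B) = 1 := by rw [← Matrix.mul_assoc, hAA, hMB]
  have hdet : IsUnit A.det :=
    IsUnit.of_mul_eq_one (a := A.det) (A * B).det
      (by rw [← Matrix.det_mul, ← Matrix.mul_assoc, hAA, hMB, Matrix.det_one])
  have hInv : (Aᵀ * A)⁻¹ = B := by
    rw [hAt, hAA]
    exact Matrix.inv_eq_right_inv hMB
  -- column norms
  have hcol : ∀ j : Fin (2 ^ k), ∑ i, (A i j) ^ 2 = x^2 + 2*x*y + nR*y^2 := by
    intro j
    rw [hAdef, shape_colnorm, ← hnR]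
  -- sensitivity
  have hsens : l2Sens A = Real.sqrt (x^2 + 2*x*y + nR*y^2) := by
    unfold l2Sens
    rw [show (fun j => Real.sqrt (∑ i, (A i j) ^ 2))
        = fun _ => Real.sqrt (x^2 + 2*x*y + nR*y^2) from funext fun j => by rw [hcol j]]
    exact ciSup_const
  have hsum_nonneg : 0 ≤ x^2 + 2*x*y + nR*y^2 := by nlinarith [sq_nonneg (x + y), sq_nonneg y]
  have hsenssq : (l2Sens A)^2 = (s1 + (nR - 1) * s2) / nR := by
    have h : x^2 + 2*x*y + nR*y^2 = (t1^2 + (nR-1)*t2^2)/nR := by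
      rw [hxdef, hydef]; field_simp; ring
    rw [hsens, Real.sq_sqrt hsum_nonneg, h, ht1sq, ht2sq]
  -- workload rewrite
  have hW' : Wᵀ * W = l2 • 1 + b • Jm (2 ^ k) := by
    rw [hW, hl2def]
    show a • 1 + b • (Jm (2 ^ k) - 1) = _
    module
  -- trace
  have htr : Matrix.trace (Wᵀ * W * (Aᵀ * A)⁻¹) = s1 + (nR - 1) * s2 := by
    have hb : b = (s1^2 - s2^2)/nR := by
      rw [hs1sq, hs2sq, hl1def, hl2def]; field_simp; ring
    rw [hInv, hW', hBdef, shape_mul, shape_trace, ← hnR, ← hs2sq, hb, hcdef]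
    field_simp
    ring
  rw [← hnR] at *
  refine ⟨A, hdet, fun j₁ j₂ => by rw [hcol j₁, hcol j₂], ?_⟩
  rw [hsenssq, htr]
  field_simp
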